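/- arXiv:1708.08047 — 3 statements merged into one kernel-verified Lean document; each statement's English description precedes it below -/
import Mathlib

section
/- Let d ≥ 2, n ∈ ℕ, λ = 2^{1/n}, Γ₀ > 0, let a_1, …, a_d be nonzero reals and α_1 < … < α_d positive integers with α_d = n. Define, for each pair j₁ < j₂, the bad set 𝒥^{(0)}_{bad}(Γ₀, j₁, j₂) = { l ∈ ℤ : 2^{−Γ₀} |a_{j₂}| λ^{α_{j₂} l} ≤ |a_{j₁}| λ^{α_{j₁} l} ≤ 2^{Γ₀} |a_{j₂}| λ^{α_{j₂} l} }, and let 𝒥^{(0)}_{good} be the complement in ℤ of the union over all pairs j₁ ≠ j₂ of these bad sets. Then 𝒥^{(0)}_{good} has at most d² connected components (maximal sets of consecutive integers). -/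
open Real

def iComp (S : Set ℤ) (l : ℤ) : Set ℤ := {m | Set.uIcc l m ⊆ S}

lemma iComp_subset (S : Set ℤ) (l : ℤ) : iComp S l ⊆ S :=
  fun _ hm => hm Set.right_mem_uIcc

lemma mem_iComp_self {S : Set ℤ} {l : ℤ} (h : l ∈ S) : l ∈ iComp S l := by
  simp only [iComp, Set.mem_setOf_eq, Set.uIcc_self, Set.singleton_subset_iff]
  exact h

lemma iComp_comm {S : Set ℤ} {l m : ℤ} : m ∈ iComp S l ↔ l ∈ iComp S m := by
  simp [iComp, Set.uIcc_comm]

lemma iComp_trans {S : Set ℤ} {l m p : ℤ} (h1 : m ∈ iComp S l) (h2 : p ∈ iComp S m) :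
    p ∈ iComp S l := fun x hx =>
  (Set.uIcc_subset_uIcc_union_uIcc (b := m) hx).elim (fun h => h1 h) (fun h => h2 h)

lemma iComp_eq_of_mem {S : Set ℤ} {l m : ℤ} (h : m ∈ iComp S l) :
    iComp S m = iComp S l :=
  Set.ext fun _ => ⟨fun hp => iComp_trans h hp, fun hp => iComp_trans (iComp_comm.mp h) hp⟩

lemma iComp_ordConnected (S : Set ℤ) (l : ℤ) : (iComp S l).OrdConnected := by
  constructor
  intro x hx y hy z hz
  intro w hw
  have h1 : Set.uIcc l z ⊆ Set.uIcc l x ∪ Set.uIcc x z := Set.uIcc_subset_uIcc_union_uIcc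
  have h2 : Set.uIcc x z ⊆ Set.uIcc x y := by
    rw [Set.uIcc_of_le hz.1, Set.uIcc_of_le (hz.1.trans hz.2)]
    exact Set.Icc_subset_Icc le_rfl hz.2
  have h3 : Set.uIcc x y ⊆ Set.uIcc x l ∪ Set.uIcc l y := Set.uIcc_subset_uIcc_union_uIcc
  rcases h1 hw with h | h
  · exact hx h
  · rcases h3 (h2 h) with h' | h'
    · exact hx (by rwa [Set.uIcc_comm] at h')
    · exact hy h'

lemma ray_ordConnected (lam : ℝ) (hlam : 1 ≤ lam) (b c₁ c₂ : ℝ) (hb : 0 ≤ b) (k : ℤ) :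
    ({l : ℤ | c₁ ≤ b * lam ^ (k * l) ∧ b * lam ^ (k * l) ≤ c₂} : Set ℤ).OrdConnected := by
  constructor
  intro x hx y hy z hz
  rcases le_or_gt 0 k with hk | hk
  · have h1 : lam ^ (k * x) ≤ lam ^ (k * z) :=
      zpow_le_zpow_right₀ hlam (mul_le_mul_of_nonneg_left hz.1 hk)
    have h2 : lam ^ (k * z) ≤ lam ^ (k * y) :=
      zpow_le_zpow_right₀ hlam (mul_le_mul_of_nonneg_left hz.2 hk)
    exact ⟨hx.1.trans (mul_le_mul_of_nonneg_left h1 hb),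
      (mul_le_mul_of_nonneg_left h2 hb).trans hy.2⟩
  · have h1 : lam ^ (k * y) ≤ lam ^ (k * z) :=
      zpow_le_zpow_right₀ hlam (mul_le_mul_of_nonpos_left hz.2 hk.le)
    have h2 : lam ^ (k * z) ≤ lam ^ (k * x) :=
      zpow_le_zpow_right₀ hlam (mul_le_mul_of_nonpos_left hz.1 hk.le)
    exact ⟨hy.1.trans (mul_le_mul_of_nonneg_left h1 hb),
      (mul_le_mul_of_nonneg_left h2 hb).trans hx.2⟩

lemma bad_ordConnected (lam : ℝ) (hlam : 1 < lam) (Γ₀ a₁ a₂ : ℝ) (α₁ α₂ : ℕ) :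
    ({l : ℤ | (2:ℝ) ^ (-Γ₀) * (|a₂| * lam ^ ((α₂:ℤ) * l)) ≤ |a₁| * lam ^ ((α₁:ℤ) * l) ∧
       |a₁| * lam ^ ((α₁:ℤ) * l) ≤ (2:ℝ) ^ Γ₀ * (|a₂| * lam ^ ((α₂:ℤ) * l))} :
       Set ℤ).OrdConnected := by
  have h0 : (0:ℝ) < lam := lt_trans one_pos hlam
  have key : ∀ l : ℤ,
      ((2:ℝ) ^ (-Γ₀) * (|a₂| * lam ^ ((α₂:ℤ) * l)) ≤ |a₁| * lam ^ ((α₁:ℤ) * l) ∧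
       |a₁| * lam ^ ((α₁:ℤ) * l) ≤ (2:ℝ) ^ Γ₀ * (|a₂| * lam ^ ((α₂:ℤ) * l))) ↔
      ((2:ℝ) ^ (-Γ₀) * |a₂| ≤ |a₁| * lam ^ (((α₁:ℤ) - α₂) * l) ∧
       |a₁| * lam ^ (((α₁:ℤ) - α₂) * l) ≤ (2:ℝ) ^ Γ₀ * |a₂|) := by
    intro l
    have hP : 0 < lam ^ ((α₂:ℤ) * l) := zpow_pos h0 _
    have hsplit : lam ^ ((α₁:ℤ) * l) = lam ^ (((α₁:ℤ) - α₂) * l) * lam ^ ((α₂:ℤ) * l) := by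
      rw [← zpow_add₀ (ne_of_gt h0)]
      ring_nf
    rw [hsplit]
    constructor
    · rintro ⟨h1, h2⟩
      constructor
      · have := (mul_le_mul_iff_of_pos_right hP).mp (by linarith [h1] :
          ((2:ℝ) ^ (-Γ₀) * |a₂|) * lam ^ ((α₂:ℤ) * l) ≤
            (|a₁| * lam ^ (((α₁:ℤ) - α₂) * l)) * lam ^ ((α₂:ℤ) * l))
        exact this
      · have := (mul_le_mul_iff_of_pos_right hP).mp (by linarith [h2] :
          (|a₁| * lam ^ (((α₁:ℤ) - α₂) * l)) * lam ^ ((α₂:ℤ) * l) ≤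
            ((2:ℝ) ^ Γ₀ * |a₂|) * lam ^ ((α₂:ℤ) * l))
        exact this
    · rintro ⟨h1, h2⟩
      constructor
      · have := (mul_le_mul_iff_of_pos_right hP).mpr h1
        linarith [this]
      · have := (mul_le_mul_iff_of_pos_right hP).mpr h2
        linarith [this]
  have heq : ({l : ℤ | (2:ℝ) ^ (-Γ₀) * (|a₂| * lam ^ ((α₂:ℤ) * l)) ≤ |a₁| * lam ^ ((α₁:ℤ) * l) ∧
       |a₁| * lam ^ ((α₁:ℤ) * l) ≤ (2:ℝ) ^ Γ₀ * (|a₂| * lam ^ ((α₂:ℤ) * l))} : Set ℤ) =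
      {l : ℤ | (2:ℝ) ^ (-Γ₀) * |a₂| ≤ |a₁| * lam ^ (((α₁:ℤ) - α₂) * l) ∧
       |a₁| * lam ^ (((α₁:ℤ) - α₂) * l) ≤ (2:ℝ) ^ Γ₀ * |a₂|} := Set.ext fun l => key l
  rw [heq]
  exact ray_ordConnected lam hlam.le |a₁| ((2:ℝ) ^ (-Γ₀) * |a₂|) ((2:ℝ) ^ Γ₀ * |a₂|)
    (abs_nonneg _) _

/-- **The good scales have at most `d²` connected components.**
Let `d ≥ 2`, `n ∈ ℕ`, `λ = 2^{1/n}`, `Γ₀ > 0`, let `a 1, …, a d` be nonzero reals and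
`α 1 < … < α d` positive integers with `α d = n`.  With the bad scales
`𝒥⁽⁰⁾_bad(Γ₀,j₁,j₂) = {l ∈ ℤ : 2^{−Γ₀}|a j₂|λ^{α j₂ l} ≤ |a j₁|λ^{α j₁ l} ≤ 2^{Γ₀}|a j₂|λ^{α j₂ l}}`,
the good set `𝒥⁽⁰⁾_good = ℤ \ ⋃_{j₁ ≠ j₂} 𝒥⁽⁰⁾_bad(Γ₀,j₁,j₂)` has at most `d²` connected
components (maximal sets of consecutive integers). -/
theorem goodScales_components_le_sq
    (d n : ℕ) (hd : 2 ≤ d) (hn : 0 < n)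
    (lam : ℝ) (hlam : lam = (2 : ℝ) ^ ((n : ℝ)⁻¹))
    (Γ₀ : ℝ) (hΓ₀ : 0 < Γ₀)
    (a : Fin d → ℝ) (ha : ∀ j, a j ≠ 0)
    (α : Fin d → ℕ) (hmono : StrictMono α) (hpos : ∀ j, 0 < α j)
    (hlast : α ⟨d - 1, by omega⟩ = n)
    (good : Set ℤ)
    (hgood : good = (⋃ (j₁ : Fin d), ⋃ (j₂ : Fin d), ⋃ (_ : j₁ ≠ j₂),
      {l : ℤ |
        (2 : ℝ) ^ (-Γ₀) * (|a j₂| * lam ^ ((α j₂ : ℤ) * l)) ≤ |a j₁| * lam ^ ((α j₁ : ℤ) * l) ∧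
        |a j₁| * lam ^ ((α j₁ : ℤ) * l) ≤ (2 : ℝ) ^ Γ₀ * (|a j₂| * lam ^ ((α j₂ : ℤ) * l))})ᶜ) :
    ∃ (k : ℕ) (C : Fin k → Set ℤ), k ≤ d ^ 2 ∧
      (∀ i, (C i).OrdConnected) ∧
      (Pairwise fun i i' => Disjoint (C i) (C i')) ∧
      (⋃ i, C i) = good ∧
      (∀ i, ∀ J : Set ℤ, J.OrdConnected → C i ⊆ J → J ⊆ good → J = C i) := by
  classical
  have hlam1 : 1 < lam := by
    rw [hlam]
    rw [Real.one_lt_rpow_iff_of_pos (by norm_num)]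
    left
    exact ⟨one_lt_two, by positivity⟩
  set bad : Fin d → Fin d → Set ℤ := fun j₁ j₂ => {l : ℤ |
        (2 : ℝ) ^ (-Γ₀) * (|a j₂| * lam ^ ((α j₂ : ℤ) * l)) ≤ |a j₁| * lam ^ ((α j₁ : ℤ) * l) ∧
        |a j₁| * lam ^ ((α j₁ : ℤ) * l) ≤ (2 : ℝ) ^ Γ₀ * (|a j₂| * lam ^ ((α j₂ : ℤ) * l))}
    with hbaddef
  have hbadOC : ∀ j₁ j₂, (bad j₁ j₂).OrdConnected := fun j₁ j₂ =>
    bad_ordConnected lam hlam1 Γ₀ (a j₁) (a j₂) (α j₁) (α j₂)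
  have hmem_bad_not_good : ∀ (m : ℤ) (j₁ j₂ : Fin d), j₁ ≠ j₂ → m ∈ bad j₁ j₂ → m ∉ good := by
    intro m j₁ j₂ hne hm hg
    rw [hgood] at hg
    exact hg (Set.mem_iUnion.mpr ⟨j₁, Set.mem_iUnion.mpr ⟨j₂, Set.mem_iUnion.mpr ⟨hne, hm⟩⟩⟩)
  have hnot_good : ∀ m : ℤ, m ∉ good → ∃ p : Fin d × Fin d, p.1 ≠ p.2 ∧ m ∈ bad p.1 p.2 := by
    intro m hm
    rw [hgood, Set.notMem_compl_iff] at hm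
    simp only [Set.mem_iUnion] at hm
    obtain ⟨j₁, j₂, hne, h⟩ := hm
    exact ⟨(j₁, j₂), hne, h⟩
  choose P hP1 hP2 using hnot_good
  set 𝒞 : Set (Set ℤ) := {C | ∃ l ∈ good, iComp good l = C} with h𝒞
  have hC_sub : ∀ C ∈ 𝒞, C ⊆ good := by
    rintro C ⟨l, hl, rfl⟩
    exact iComp_subset good l
  have hleast : ∀ C ∈ 𝒞, ∀ m : ℤ, IsLeast C m → (m - 1) ∉ good := by
    rintro C ⟨l, hl, rfl⟩ m hm hbad1
    have hmC : m ∈ iComp good l := hm.1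
    have hmg : m ∈ good := iComp_subset good l hmC
    have h1 : (m - 1) ∈ iComp good m := by
      intro x hx
      rw [Set.uIcc_comm, Set.uIcc_of_le (by omega : m - 1 ≤ m)] at hx
      have : x = m - 1 ∨ x = m := by
        rcases hx with ⟨h1, h2⟩; omega
      rcases this with rfl | rfl
      · exact hbad1
      · exact hmg
    have h2 : (m - 1) ∈ iComp good l := iComp_trans hmC h1
    have := hm.2 h2
    omega
  have hdown : ∀ C ∈ 𝒞, (¬ ∃ m, IsLeast C m) → ∀ m ∈ C, ∀ x, x ≤ m → x ∈ C := by
    rintro C ⟨l, hl, rfl⟩ hno m hm x hx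
    have step : ∀ m' ∈ iComp good l, m' - 1 ∈ iComp good l := by
      intro m' hm'
      by_contra h
      apply hno
      refine ⟨m', hm', ?_⟩
      intro y hy
      by_contra hy'
      push_neg at hy'
      have hmem : m' - 1 ∈ iComp good l :=
        (iComp_ordConnected good l).out hy hm' ⟨by omega, by omega⟩
      exact h hmem
    have hiter : ∀ i : ℕ, m - (i : ℤ) ∈ iComp good l := by
      intro i
      induction i with
      | zero => simpa using hm
      | succ i ih =>
        have := step _ ih
        have heq : m - ((i : ℤ) + 1) = m - (i : ℤ) - 1 := by ring
        rw [Nat.cast_succ, heq]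
        exact this
    have hxeq : x = m - (((m - x).toNat : ℕ) : ℤ) := by
      have := Int.toNat_of_nonneg (by omega : (0:ℤ) ≤ m - x)
      omega
    rw [hxeq]
    exact hiter _
  set f : ↥𝒞 → Fin d × Fin d := fun C =>
    if h : ∃ m, IsLeast (C : Set ℤ) m then
      P (h.choose - 1) (hleast C.1 C.2 h.choose h.choose_spec)
    else (⟨0, by omega⟩, ⟨0, by omega⟩) with hfdef
  have hfinj : Function.Injective f := by
    intro C C' hff
    by_cases hC : ∃ m, IsLeast (C : Set ℤ) m <;>
      by_cases hC' : ∃ m, IsLeast (C' : Set ℤ) m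
    · -- both have a least element
      rw [hfdef] at hff
      simp only [dif_pos hC, dif_pos hC'] at hff
      set m := hC.choose with hm
      set m' := hC'.choose with hm'
      have hmL : IsLeast (C : Set ℤ) m := hC.choose_spec
      have hmL' : IsLeast (C' : Set ℤ) m' := hC'.choose_spec
      set p := P (m - 1) (hleast C.1 C.2 m hmL) with hp
      have hne : p.1 ≠ p.2 := hP1 _ _
      have hb1 : (m - 1) ∈ bad p.1 p.2 := hP2 _ _
      have hb2 : (m' - 1) ∈ bad p.1 p.2 := by
        have := hP2 (m' - 1) (hleast C'.1 C'.2 m' hmL')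
        rwa [← hff] at this
      have hkey : ∀ u v : ℤ, u < v → u ∈ good → (u - 1) ∈ bad p.1 p.2 →
          (v - 1) ∈ bad p.1 p.2 → False := by
        intro u v huv hu h1 h2
        have : u ∈ bad p.1 p.2 :=
          (hbadOC p.1 p.2).out h1 h2 ⟨by omega, by omega⟩
        exact hmem_bad_not_good u p.1 p.2 hne this hu
      have hmm' : m = m' := by
        rcases lt_trichotomy m m' with h | h | h
        · exact absurd (hkey m m' h (hC_sub C.1 C.2 hmL.1) hb1 hb2) (by simp)
        · exact h
        · exact absurd (hkey m' m h (hC_sub C'.1 C'.2 hmL'.1) hb2 hb1) (by simp)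
      -- conclude C = C'
      obtain ⟨l, hl, hCl⟩ := C.2
      obtain ⟨l', hl', hCl'⟩ := C'.2
      apply Subtype.ext
      have e1 : iComp good m = (C : Set ℤ) := by
        rw [← hCl]
        exact iComp_eq_of_mem (hCl ▸ hmL.1)
      have e2 : iComp good m' = (C' : Set ℤ) := by
        rw [← hCl']
        exact iComp_eq_of_mem (hCl' ▸ hmL'.1)
      rw [← e1, ← e2, hmm']
    · exfalso
      rw [hfdef] at hff
      simp only [dif_pos hC, dif_neg hC'] at hff
      have : (P (hC.choose - 1) (hleast C.1 C.2 hC.choose hC.choose_spec)).1 ≠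
          (P (hC.choose - 1) (hleast C.1 C.2 hC.choose hC.choose_spec)).2 := hP1 _ _
      rw [hff] at this
      exact this rfl
    · exfalso
      rw [hfdef] at hff
      simp only [dif_neg hC, dif_pos hC'] at hff
      have : (P (hC'.choose - 1) (hleast C'.1 C'.2 hC'.choose hC'.choose_spec)).1 ≠
          (P (hC'.choose - 1) (hleast C'.1 C'.2 hC'.choose hC'.choose_spec)).2 := hP1 _ _
      rw [← hff] at this
      exact this rfl
    · -- both downward closed
      obtain ⟨l, hl, hCl⟩ := C.2
      obtain ⟨l', hl', hCl'⟩ := C'.2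
      apply Subtype.ext
      rcases le_total l l' with h | h
      · have hlin : l ∈ (C' : Set ℤ) :=
          hdown C'.1 C'.2 hC' l' (hCl' ▸ mem_iComp_self hl') l h
        rw [← hCl, ← hCl']
        rw [← hCl'] at hlin
        exact iComp_eq_of_mem hlin
      · have hlin : l' ∈ (C : Set ℤ) :=
          hdown C.1 C.2 hC l (hCl ▸ mem_iComp_self hl) l' h
        rw [← hCl, ← hCl']
        rw [← hCl] at hlin
        exact (iComp_eq_of_mem hlin).symm
  haveI : Finite ↥𝒞 := Finite.of_injective f hfinj
  set e := Finite.equivFin ↥𝒞 with he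
  refine ⟨Nat.card ↥𝒞, fun i => ((e.symm i : Set ℤ)), ?_, ?_, ?_, ?_, ?_⟩
  · calc Nat.card ↥𝒞 ≤ Nat.card (Fin d × Fin d) := Nat.card_le_card_of_injective f hfinj
    _ = d * d := by simp [Nat.card_eq_fintype_card]
    _ = d ^ 2 := (sq d).symm
  · intro i
    show ((e.symm i : Set ℤ)).OrdConnected
    obtain ⟨l, hl, hCl⟩ := (e.symm i).2
    rw [← hCl]
    exact iComp_ordConnected good l
  · intro i i' hne
    have hvne : ((e.symm i : Set ℤ)) ≠ ((e.symm i' : Set ℤ)) := by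
      intro h
      exact hne (e.symm.injective (Subtype.ext h))
    rw [Set.disjoint_left]
    intro x hx hx'
    replace hx : x ∈ (e.symm i : Set ℤ) := hx
    replace hx' : x ∈ (e.symm i' : Set ℤ) := hx'
    obtain ⟨l, hl, hCl⟩ := (e.symm i).2
    obtain ⟨l', hl', hCl'⟩ := (e.symm i').2
    apply hvne
    rw [← hCl, ← hCl']
    rw [← hCl] at hx
    rw [← hCl'] at hx'
    rw [← iComp_eq_of_mem hx, ← iComp_eq_of_mem hx']
  · ext x
    simp only [Set.mem_iUnion]
    constructor
    · rintro ⟨i, hi⟩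
      exact hC_sub _ (e.symm i).2 hi
    · intro hx
      refine ⟨e ⟨iComp good x, ⟨x, hx, rfl⟩⟩, ?_⟩
      rw [he]
      simp only [Equiv.symm_apply_apply]
      exact mem_iComp_self hx
  · intro i J hJ hsub hJg
    obtain ⟨l, hl, hCl⟩ := (e.symm i).2
    have hlC : l ∈ (e.symm i : Set ℤ) := by rw [← hCl]; exact mem_iComp_self hl
    have hlJ : l ∈ J := hsub hlC
    apply Set.Subset.antisymm _ hsub
    intro m hm
    show m ∈ (e.symm i : Set ℤ)
    rw [← hCl]
    intro w hw
    exact hJg (hJ.uIcc_subset hlJ hm hw)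
end

section
/- Let d ≥ 2, n ∈ ℕ, λ = 2^{1/n}, Γ₀ ≥ 1, let a_1, …, a_d be nonzero reals and α_1 < … < α_d ≤ n positive integers. Let I ⊆ 𝒥^{(0)}_{good} be a set of consecutive integers contained in the good scales (i.e., for every l ∈ I and every pair j ≠ j', either |a_j| λ^{α_j l} > 2^{Γ₀} |a_{j'}| λ^{α_{j'} l} or |a_{j'}| λ^{α_{j'} l} > 2^{Γ₀} |a_j| λ^{α_j l}). Then there exists a single index j₁ ∈ {1, …, d} such that for every l ∈ I and every j' ≠ j₁ one has |a_{j₁}| λ^{α_{j₁} l} > 2^{Γ₀} |a_{j'}| λ^{α_{j'} l}; that is, on each connected component of the good scales exactly one monomial dominates. -/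
open Real

/-- **On each connected component of the good scales exactly one monomial dominates.**
Let `d ≥ 2`, `n ∈ ℕ`, `λ = 2^{1/n}`, `Γ₀ ≥ 1`, let `a 1, …, a d` be nonzero reals and
`α 1 < … < α d ≤ n` positive integers.  Let `I ⊆ ℤ` be a set of consecutive integers
consisting of good scales: for every `l ∈ I` and every pair `j ≠ j'`, either
`|a j| λ^{α j l} > 2^{Γ₀} |a j'| λ^{α j' l}` or the reverse strict domination holds.
Then there is a single index `j₁` such that for every `l ∈ I` and every `j' ≠ j₁`,
`|a j₁| λ^{α j₁ l} > 2^{Γ₀} |a j'| λ^{α j' l}`. -/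
theorem single_dominating_monomial_on_component
    (d n : ℕ) (hd : 2 ≤ d) (hn : 0 < n)
    (lam : ℝ) (hlam : lam = (2 : ℝ) ^ ((n : ℝ)⁻¹))
    (Γ₀ : ℝ) (hΓ₀ : 1 ≤ Γ₀)
    (a : Fin d → ℝ) (ha : ∀ j, a j ≠ 0)
    (α : Fin d → ℕ) (hmono : StrictMono α) (hpos : ∀ j, 0 < α j) (hle : ∀ j, α j ≤ n)
    (I : Set ℤ) (hIconn : I.OrdConnected)
    (hIgood : ∀ l ∈ I, ∀ j j' : Fin d, j ≠ j' →
      (2 : ℝ) ^ Γ₀ * (|a j'| * lam ^ ((α j' : ℤ) * l)) < |a j| * lam ^ ((α j : ℤ) * l) ∨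
      (2 : ℝ) ^ Γ₀ * (|a j| * lam ^ ((α j : ℤ) * l)) < |a j'| * lam ^ ((α j' : ℤ) * l)) :
    ∃ j₁ : Fin d, ∀ l ∈ I, ∀ j' : Fin d, j' ≠ j₁ →
      (2 : ℝ) ^ Γ₀ * (|a j'| * lam ^ ((α j' : ℤ) * l)) < |a j₁| * lam ^ ((α j₁ : ℤ) * l) := by
  have hdpos : 0 < d := by omega
  have hlam1 : (1:ℝ) ≤ lam := by
    rw [hlam]
    exact Real.one_le_rpow one_le_two (by positivity)
  have hlam0 : (0:ℝ) < lam := lt_of_lt_of_le one_pos hlam1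
  have hlamn : lam ^ n = 2 := by
    rw [hlam, ← Real.rpow_natCast ((2:ℝ) ^ ((n:ℝ)⁻¹)) n, ← Real.rpow_mul (by norm_num),
      inv_mul_cancel₀ (by exact_mod_cast hn.ne'), Real.rpow_one]
  set f : ℤ → Fin d → ℝ := fun l j => |a j| * lam ^ ((α j : ℤ) * l) with hfdef
  have hfpos : ∀ l j, 0 < f l j := fun l j => mul_pos (abs_pos.2 (ha j)) (zpow_pos hlam0 _)
  have hΓ1 : (1:ℝ) ≤ (2:ℝ) ^ Γ₀ := Real.one_le_rpow one_le_two (le_trans zero_le_one hΓ₀)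
  have hΓ2 : (2:ℝ) ≤ (2:ℝ) ^ Γ₀ := by
    calc (2:ℝ) = (2:ℝ) ^ (1:ℝ) := (Real.rpow_one 2).symm
    _ ≤ (2:ℝ) ^ Γ₀ := (Real.rpow_le_rpow_left_iff one_lt_two).2 hΓ₀
  have hpow1 : ∀ j, (1:ℝ) ≤ lam ^ (α j : ℤ) := by
    intro j
    rw [zpow_natCast]
    exact one_le_pow₀ hlam1
  have hpow2 : ∀ j, lam ^ (α j : ℤ) ≤ 2 := by
    intro j
    rw [zpow_natCast, ← hlamn]
    exact pow_le_pow_right₀ hlam1 (hle j)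
  -- from being (weakly) maximal at a good scale, deduce strict domination
  have key : ∀ l ∈ I, ∀ j : Fin d, (∀ j', f l j' ≤ f l j) →
      ∀ j', j' ≠ j → (2:ℝ) ^ Γ₀ * f l j' < f l j := by
    intro l hl j hmax j' hj'
    rcases hIgood l hl j j' (Ne.symm hj') with h | h
    · exact h
    · exfalso
      have h' : (2:ℝ) ^ Γ₀ * f l j < f l j' := h
      have h1 := hmax j'
      have h2 := hfpos l j
      nlinarith
  -- relating f at adjacent scales
  have hstepf : ∀ (l : ℤ) (j : Fin d), f (l + 1) j = f l j * lam ^ (α j : ℤ) := by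
    intro l j
    simp only [hfdef]
    rw [mul_add_one, zpow_add₀ hlam0.ne', mul_assoc]
  -- domination propagates to l+1
  have fwd : ∀ l : ℤ, l ∈ I → (l + 1) ∈ I → ∀ j : Fin d,
      (∀ j', j' ≠ j → (2:ℝ) ^ Γ₀ * f l j' < f l j) →
      (∀ j', j' ≠ j → (2:ℝ) ^ Γ₀ * f (l+1) j' < f (l+1) j) := by
    intro l hl hl1 j hdom
    have hmax : ∀ j', f (l+1) j' ≤ f (l+1) j := by
      intro j'
      rcases eq_or_ne j' j with rfl | hne
      · exact le_rfl
      · have h1 := hdom j' hne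
        have h2 := hfpos l j'
        have h3 := hfpos l j
        have h4 := hpow1 j
        have h5 := hpow2 j'
        rw [hstepf l j', hstepf l j]
        have hA : f l j' * lam ^ (α j' : ℤ) ≤ 2 * f l j' := by nlinarith
        have hB : (2:ℝ) * f l j' < f l j := by nlinarith
        nlinarith
    exact key (l+1) hl1 j hmax
  -- domination propagates to l-1
  have bwd : ∀ l : ℤ, l ∈ I → (l - 1) ∈ I → ∀ j : Fin d,
      (∀ j', j' ≠ j → (2:ℝ) ^ Γ₀ * f l j' < f l j) →
      (∀ j', j' ≠ j → (2:ℝ) ^ Γ₀ * f (l-1) j' < f (l-1) j) := by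
    intro l hl hl1 j hdom
    have hmax : ∀ j', f (l-1) j' ≤ f (l-1) j := by
      intro j'
      rcases eq_or_ne j' j with rfl | hne
      · exact le_rfl
      · have h1 := hdom j' hne
        have h2 := hfpos (l-1) j'
        have h3 := hfpos (l-1) j
        have h4 := hpow1 j'
        have h5 := hpow2 j
        have e1 : f l j' = f (l-1) j' * lam ^ (α j' : ℤ) := by
          rw [← hstepf]; ring_nf
        have e2 : f l j = f (l-1) j * lam ^ (α j : ℤ) := by
          rw [← hstepf]; ring_nf
        rw [e1, e2] at h1
        have hx : 2 * f (l-1) j' ≤ (2:ℝ) ^ Γ₀ * (f (l-1) j' * lam ^ (α j' : ℤ)) := by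
          have hz : (2:ℝ) * 1 ≤ (2:ℝ) ^ Γ₀ * lam ^ (α j' : ℤ) :=
            mul_le_mul hΓ2 h4 zero_le_one (by positivity)
          nlinarith
        have hy : f (l-1) j * lam ^ (α j : ℤ) ≤ 2 * f (l-1) j := by nlinarith
        linarith
    exact key (l-1) hl1 j hmax
  -- now the main argument
  rcases Set.eq_empty_or_nonempty I with rfl | ⟨l₀, hl₀⟩
  · exact ⟨⟨0, hdpos⟩, fun l hl => absurd hl (Set.notMem_empty l)⟩
  obtain ⟨j₁, hj₁⟩ : ∃ j : Fin d, ∀ j', f l₀ j' ≤ f l₀ j := by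
    obtain ⟨j, -, hj⟩ := Finset.exists_max_image Finset.univ (f l₀) ⟨⟨0, hdpos⟩, Finset.mem_univ _⟩
    exact ⟨j, fun j' => hj j' (Finset.mem_univ j')⟩
  have hdom₀ : ∀ j', j' ≠ j₁ → (2:ℝ) ^ Γ₀ * f l₀ j' < f l₀ j₁ := key l₀ hl₀ j₁ hj₁
  refine ⟨j₁, ?_⟩
  have hup : ∀ m : ℕ, (l₀ + m) ∈ I → ∀ j', j' ≠ j₁ →
      (2:ℝ) ^ Γ₀ * f (l₀ + m) j' < f (l₀ + m) j₁ := by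
    intro m
    induction m with
    | zero => intro _; simpa using hdom₀
    | succ k ih =>
      intro hmem
      have hprev : (l₀ + k) ∈ I := by
        apply hIconn.out hl₀ hmem
        constructor <;> simp <;> omega
      have hcast : (l₀ + ((k+1 : ℕ) : ℤ)) = (l₀ + (k : ℤ)) + 1 := by push_cast; ring
      rw [hcast] at hmem ⊢
      exact fwd (l₀ + k) hprev hmem j₁ (ih hprev)
  have hdown : ∀ m : ℕ, (l₀ - m) ∈ I → ∀ j', j' ≠ j₁ →
      (2:ℝ) ^ Γ₀ * f (l₀ - m) j' < f (l₀ - m) j₁ := by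
    intro m
    induction m with
    | zero => intro _; simpa using hdom₀
    | succ k ih =>
      intro hmem
      have hprev : (l₀ - k) ∈ I := by
        apply hIconn.out hmem hl₀
        constructor <;> simp <;> omega
      have hcast : (l₀ - ((k+1 : ℕ) : ℤ)) = (l₀ - (k : ℤ)) - 1 := by push_cast; ring
      rw [hcast] at hmem ⊢
      exact bwd (l₀ - k) hprev hmem j₁ (ih hprev)
  intro l hl j' hj'
  rcases le_or_gt l₀ l with hle' | hlt
  · have : l = l₀ + (l - l₀).toNat := by omega
    rw [this] at hl ⊢
    exact hup _ hl j' hj'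
  · have : l = l₀ - (l₀ - l).toNat := by omega
    rw [this] at hl ⊢
    exact hdown _ hl j' hj'
end

section
/- Let d ≥ 1, let Q(t) = a_1 t^{α_1} + … + a_d t^{α_d} with real coefficients and distinct positive integer exponents α_1 < … < α_d = n, and let λ = 2^{1/n} and Γ₀ = 2^{10·d!}. Suppose that for some index j₁ and some l ∈ ℤ we have |a_{j₁}| λ^{α_{j₁} l} ≥ 2^{Γ₀} |a_{j'}| λ^{α_{j'} l} for every j' ≠ j₁. Then for every t with λ^{l−2} ≤ |t| ≤ λ^{l+1}, one has |Q(t)| ≤ 2 |a_{j₁}| |t|^{α_{j₁}}. -/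
open Real

/-- **The dominating monomial controls the size of `Q` on the corresponding scales.**
Let `d ≥ 1`, `Q(t) = ∑ j, a j * t ^ (α j)` with real coefficients and distinct positive
integer exponents `α 1 < … < α d = n`, `λ = 2^{1/n}`, `Γ₀ = 2^{10·d!}`.  If for some
index `j₁` and some `l ∈ ℤ` we have `|a j₁| λ^{α j₁ l} ≥ 2^{Γ₀} |a j'| λ^{α j' l}` for
every `j' ≠ j₁`, then for every `t` with `λ^{l−2} ≤ |t| ≤ λ^{l+1}` we have
`|Q(t)| ≤ 2 |a j₁| |t|^{α j₁}`. -/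
theorem dominating_monomial_upper_bound
    (d : ℕ) (hd : 1 ≤ d) (n : ℕ)
    (a : Fin d → ℝ) (α : Fin d → ℕ)
    (hmono : StrictMono α) (hpos : ∀ j, 0 < α j)
    (hlast : α ⟨d - 1, by omega⟩ = n)
    (lam : ℝ) (hlam : lam = (2 : ℝ) ^ ((n : ℝ)⁻¹))
    (Γ₀ : ℕ) (hΓ₀ : Γ₀ = 2 ^ (10 * Nat.factorial d))
    (j₁ : Fin d) (l : ℤ)
    (hdom : ∀ j' : Fin d, j' ≠ j₁ →
      (2 : ℝ) ^ Γ₀ * (|a j'| * lam ^ ((α j' : ℤ) * l)) ≤ |a j₁| * lam ^ ((α j₁ : ℤ) * l)) :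
    ∀ t : ℝ, lam ^ (l - 2) ≤ |t| → |t| ≤ lam ^ (l + 1) →
      |∑ j, a j * t ^ α j| ≤ 2 * |a j₁| * |t| ^ α j₁ := by
  intro t ht1 ht2
  have hn : 1 ≤ n := hlast ▸ hpos _
  have hlam0 : (0:ℝ) < lam := by rw [hlam]; positivity
  have hle : ∀ j, α j ≤ n := by
    intro j
    have : j ≤ (⟨d - 1, by omega⟩ : Fin d) := by
      rw [Fin.le_def]; simp; omega
    exact hlast ▸ hmono.monotone this
  -- lam ^ (α j) ≤ 2
  have lamα : ∀ j : Fin d, lam ^ (α j : ℤ) ≤ 2 := by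
    intro j
    rw [zpow_natCast, hlam, ← Real.rpow_natCast ((2:ℝ) ^ ((n:ℝ)⁻¹)) (α j),
      ← Real.rpow_mul (by norm_num)]
    calc (2:ℝ) ^ ((n:ℝ)⁻¹ * (α j : ℝ)) ≤ (2:ℝ) ^ (1:ℝ) := by
          apply Real.rpow_le_rpow_of_exponent_le (by norm_num)
          have hcast : (α j : ℝ) ≤ n := by exact_mod_cast hle j
          rw [inv_mul_le_iff₀ (by positivity)]
          linarith
      _ = 2 := Real.rpow_one 2
  have ht0 : 0 < |t| := lt_of_lt_of_le (zpow_pos hlam0 _) ht1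
  -- |t|^(α j) ≤ 2 * lam^(α j * l)
  have tpow_le : ∀ j : Fin d, |t| ^ α j ≤ 2 * lam ^ ((α j : ℤ) * l) := by
    intro j
    calc |t| ^ α j ≤ (lam ^ (l+1)) ^ α j := pow_le_pow_left₀ (abs_nonneg t) ht2 _
      _ = lam ^ ((l+1) * (α j : ℤ)) := by
          rw [← zpow_natCast (lam ^ (l+1)) (α j), ← zpow_mul]
      _ = lam ^ ((α j : ℤ) * l) * lam ^ (α j : ℤ) := by
          rw [← zpow_add₀ (ne_of_gt hlam0)]; ring_nf
      _ ≤ lam ^ ((α j : ℤ) * l) * 2 := by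
          exact mul_le_mul_of_nonneg_left (lamα j) (le_of_lt (zpow_pos hlam0 _))
      _ = 2 * lam ^ ((α j : ℤ) * l) := by ring
  -- lam^(α j * l) ≤ 4 * |t|^(α j)
  have lampow_le : ∀ j : Fin d, lam ^ ((α j : ℤ) * l) ≤ 4 * |t| ^ α j := by
    intro j
    have h1 : lam ^ ((l-2) * (α j : ℤ)) ≤ |t| ^ α j := by
      calc lam ^ ((l-2) * (α j : ℤ)) = (lam ^ (l-2)) ^ α j := by
            rw [← zpow_natCast (lam ^ (l-2)) (α j), ← zpow_mul]
        _ ≤ |t| ^ α j := pow_le_pow_left₀ (le_of_lt (zpow_pos hlam0 _)) ht1 _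
    have h2 : lam ^ ((α j : ℤ) * l) = lam ^ ((l-2) * (α j : ℤ)) * (lam ^ (α j : ℤ))^2 := by
      rw [← zpow_natCast (lam ^ (α j : ℤ)) 2, ← zpow_mul, ← zpow_add₀ (ne_of_gt hlam0)]
      ring_nf
    have h3 : (lam ^ (α j : ℤ))^2 ≤ 4 := by
      have := lamα j
      nlinarith [zpow_pos hlam0 (α j : ℤ)]
    calc lam ^ ((α j : ℤ) * l) = lam ^ ((l-2) * (α j : ℤ)) * (lam ^ (α j : ℤ))^2 := h2
      _ ≤ |t| ^ α j * 4 := by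
          apply mul_le_mul h1 h3 (by positivity) (by positivity)
      _ = 4 * |t| ^ α j := by ring
  set X := |a j₁| * |t| ^ α j₁ with hX
  have hX0 : 0 ≤ X := by positivity
  have key : ∀ j' : Fin d, j' ≠ j₁ → |a j'| * |t| ^ α j' ≤ 8 / 2 ^ Γ₀ * X := by
    intro j' hj'
    have h1 : |a j'| * |t| ^ α j' ≤ 2 * (|a j'| * lam ^ ((α j' : ℤ) * l)) := by
      have := tpow_le j'
      nlinarith [abs_nonneg (a j')]
    have h2 : |a j'| * lam ^ ((α j' : ℤ) * l) ≤ (|a j₁| * lam ^ ((α j₁ : ℤ) * l)) / 2 ^ Γ₀ := by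
      rw [le_div_iff₀ (by positivity)]
      linarith [hdom j' hj']
    have h3 : |a j₁| * lam ^ ((α j₁ : ℤ) * l) ≤ 4 * X := by
      have := lampow_le j₁
      nlinarith [abs_nonneg (a j₁)]
    have h4 : (0:ℝ) < 2 ^ Γ₀ := by positivity
    calc |a j'| * |t| ^ α j' ≤ 2 * ((|a j₁| * lam ^ ((α j₁ : ℤ) * l)) / 2 ^ Γ₀) := by linarith
      _ ≤ 2 * (4 * X / 2 ^ Γ₀) := by gcongr
      _ = 8 / 2 ^ Γ₀ * X := by ring
  -- the counting bound
  have hcount : ((d - 1 : ℕ) : ℝ) * (8 / 2 ^ Γ₀) ≤ 1 := by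
    have hnat : (d - 1) * 8 ≤ 2 ^ Γ₀ := by
      have h1 : d - 1 < 2 ^ d := lt_of_le_of_lt (Nat.sub_le d 1) Nat.lt_two_pow_self
      have h2 : (d - 1) * 8 < 2 ^ (d + 3) := by
        calc (d - 1) * 8 < 2 ^ d * 8 := by omega
          _ = 2 ^ (d + 3) := by ring
      have h3 : d + 3 ≤ Γ₀ := by
        have hdf : d ≤ Nat.factorial d := Nat.self_le_factorial d
        have h5 : 10 * Nat.factorial d < 2 ^ (10 * Nat.factorial d) :=
          Nat.lt_two_pow_self
        rw [hΓ₀]; omega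
      calc (d - 1) * 8 ≤ 2 ^ (d + 3) := le_of_lt h2
        _ ≤ 2 ^ Γ₀ := Nat.pow_le_pow_right (by norm_num) h3
    rw [show ((d - 1 : ℕ) : ℝ) * (8 / 2 ^ Γ₀) = ((d - 1 : ℕ) : ℝ) * 8 / 2 ^ Γ₀ from by ring,
      div_le_one (by positivity)]
    calc ((d - 1 : ℕ) : ℝ) * 8 = (((d - 1) * 8 : ℕ) : ℝ) := by push_cast; ring
      _ ≤ ((2 ^ Γ₀ : ℕ) : ℝ) := by exact_mod_cast hnat
      _ = 2 ^ Γ₀ := by push_cast; ring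
  -- sum bound
  calc |∑ j, a j * t ^ α j| ≤ ∑ j, |a j * t ^ α j| := Finset.abs_sum_le_sum_abs _ _
    _ = ∑ j, |a j| * |t| ^ α j := by
        apply Finset.sum_congr rfl; intro j _; rw [abs_mul, abs_pow]
    _ = |a j₁| * |t| ^ α j₁ + ∑ j ∈ Finset.univ.erase j₁, |a j| * |t| ^ α j :=
        (Finset.add_sum_erase _ _ (Finset.mem_univ j₁)).symm
    _ ≤ X + (Finset.univ.erase j₁).card • (8 / 2 ^ Γ₀ * X) := by
        apply add_le_add_right
        apply Finset.sum_le_card_nsmul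
        intro j hj
        exact key j (Finset.ne_of_mem_erase hj)
    _ ≤ X + X := by
        apply add_le_add_right
        rw [Finset.card_erase_of_mem (Finset.mem_univ j₁), Finset.card_univ, Fintype.card_fin,
          nsmul_eq_mul]
        calc ((d - 1 : ℕ) : ℝ) * (8 / 2 ^ Γ₀ * X) = ((d - 1 : ℕ) : ℝ) * (8 / 2 ^ Γ₀) * X := by ring
          _ ≤ 1 * X := mul_le_mul_of_nonneg_right hcount hX0
          _ = X := one_mul X
    _ = 2 * |a j₁| * |t| ^ α j₁ := by rw [hX]; ring
end
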